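/- For any two graphs G₁ and G₂, thin(G₁ □ G₂) ≤ thin(G₁)·|V(G₂)|, where □ denotes the Cartesian product; the analogous bound holds for the proper thinness. -/

import Mathlib

open SimpleGraph

/-- An ordering (given by an injective rank function `f`) and a partition (given by a
coloring `c`) are consistent: for `r < s < t`, if `r, s` are in the same class and
`t` is adjacent to `r`, then `t` is adjacent to `s`. -/
def Consistent {V : Type*} (G : SimpleGraph V) (f : V → ℕ) (c : V → ℕ) : Prop :=
  ∀ r s t : V, f r < f s → f s < f t → c r = c s → G.Adj t r → G.Adj t s

/-- Strong consistency: consistency with the ordering and with its reverse. -/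
def StronglyConsistent {V : Type*} (G : SimpleGraph V) (f : V → ℕ) (c : V → ℕ) : Prop :=
  Consistent G f c ∧
    ∀ r s t : V, f r < f s → f s < f t → c s = c t → G.Adj t r → G.Adj s r

/-- The thinness of a graph. -/
noncomputable def thin {V : Type*} (G : SimpleGraph V) : ℕ :=
  sInf {k | ∃ f c : V → ℕ, Function.Injective f ∧ (∀ v, c v < k) ∧ Consistent G f c}

/-- The proper thinness of a graph. -/
noncomputable def pthin {V : Type*} (G : SimpleGraph V) : ℕ :=
  sInf {k | ∃ f c : V → ℕ, Function.Injective f ∧ (∀ v, c v < k) ∧ StronglyConsistent G f c}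

/-- Independent thinness: classes must be independent sets. -/
noncomputable def indthin {V : Type*} (G : SimpleGraph V) : ℕ :=
  sInf {k | ∃ f c : V → ℕ, Function.Injective f ∧ (∀ v, c v < k) ∧ Consistent G f c ∧
    ∀ u v : V, c u = c v → ¬ G.Adj u v}

/-- Independent proper thinness. -/
noncomputable def indpthin {V : Type*} (G : SimpleGraph V) : ℕ :=
  sInf {k | ∃ f c : V → ℕ, Function.Injective f ∧ (∀ v, c v < k) ∧ StronglyConsistent G f c ∧
    ∀ u v : V, c u = c v → ¬ G.Adj u v}

/-- Complete thinness: classes must be cliques. -/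
noncomputable def compthin {V : Type*} (G : SimpleGraph V) : ℕ :=
  sInf {k | ∃ f c : V → ℕ, Function.Injective f ∧ (∀ v, c v < k) ∧ Consistent G f c ∧
    ∀ u v : V, u ≠ v → c u = c v → G.Adj u v}

/-- Complete proper thinness. -/
noncomputable def comppthin {V : Type*} (G : SimpleGraph V) : ℕ :=
  sInf {k | ∃ f c : V → ℕ, Function.Injective f ∧ (∀ v, c v < k) ∧ StronglyConsistent G f c ∧
    ∀ u v : V, u ≠ v → c u = c v → G.Adj u v}

/-- The incompatibility graph `G_<` of a graph and an ordering: for `v < w`,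
`vw` is an edge iff there is `z > w` adjacent to `v` but not to `w`. -/
def incompat {V : Type*} (G : SimpleGraph V) (f : V → ℕ) : SimpleGraph V where
  Adj v w :=
    (f v < f w ∧ ∃ z, f w < f z ∧ G.Adj z v ∧ ¬ G.Adj z w) ∨
    (f w < f v ∧ ∃ z, f v < f z ∧ G.Adj z w ∧ ¬ G.Adj z v)
  symm := ⟨fun v w h => h.symm⟩
  loopless := ⟨fun v h => by rcases h with ⟨h, _⟩ | ⟨h, _⟩ <;> exact lt_irrefl _ h⟩

/-- The join of two graphs. -/
def joinG {V₁ V₂ : Type*} (G₁ : SimpleGraph V₁) (G₂ : SimpleGraph V₂) :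
    SimpleGraph (V₁ ⊕ V₂) where
  Adj x y := match x, y with
    | Sum.inl u, Sum.inl v => G₁.Adj u v
    | Sum.inr u, Sum.inr v => G₂.Adj u v
    | Sum.inl _, Sum.inr _ => True
    | Sum.inr _, Sum.inl _ => True
  symm := by constructor; rintro (u | u) (v | v) h
             · exact G₁.adj_symm h
             · trivial
             · trivial
             · exact G₂.adj_symm h
  loopless := by constructor; rintro (u | u) h
                 · exact G₁.loopless.irrefl u h
                 · exact G₂.loopless.irrefl u h

/-- A graph is complete iff all pairs of distinct vertices are adjacent. -/
def IsCompleteGraph {V : Type*} (G : SimpleGraph V) : Prop :=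
  ∀ u v : V, u ≠ v → G.Adj u v

/-- The clique number of a graph. -/
noncomputable def omegaNum {V : Type*} (G : SimpleGraph V) : ℕ :=
  sSup {n | ∃ s : Finset V, s.card = n ∧ ∀ u ∈ s, ∀ v ∈ s, u ≠ v → G.Adj u v}

/-- The independence number of a graph. -/
noncomputable def alphaNum {V : Type*} (G : SimpleGraph V) : ℕ :=
  sSup {n | ∃ s : Finset V, s.card = n ∧ ∀ u ∈ s, ∀ v ∈ s, u ≠ v → ¬ G.Adj u v}


private lemma aux_decomp {n a b a' b' : ℕ} (hb : b < n) (hb' : b' < n)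
    (h : a * n + b = a' * n + b') : a = a' ∧ b = b' := by
  have key : ∀ x y u v : ℕ, u < n → v < n → x < y → x * n + u < y * n + v := by
    intro x y u v hu hv hxy
    calc x * n + u < x * n + n := by omega
      _ = (x + 1) * n := by ring
      _ ≤ y * n := Nat.mul_le_mul_right _ hxy
      _ ≤ y * n + v := Nat.le_add_right _ _
  have ha : a = a' := by
    rcases lt_trichotomy a a' with hl | he | hl
    · exact absurd h (Nat.ne_of_lt (key _ _ _ _ hb hb' hl))
    · exact he
    · exact absurd h.symm (Nat.ne_of_lt (key _ _ _ _ hb' hb hl))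
  subst ha
  omega

private lemma aux_mono_lt {n a b a' : ℕ} (h : a * n + b < a' * n + b) : a < a' := by
  by_contra hc
  push_neg at hc
  exact absurd h (not_lt.mpr (Nat.add_le_add_right (Nat.mul_le_mul_right _ hc) _))

private lemma aux_strict {n a b a' b' : ℕ} (hb' : b' < n) (h : a < a') :
    a * n + b' < a' * n + b := by
  calc a * n + b' < a * n + n := by omega
    _ = (a + 1) * n := by ring
    _ ≤ a' * n := Nat.mul_le_mul_right _ h
    _ ≤ a' * n + b := Nat.le_add_right _ _

private lemma aux_key {V₁ V₂ : Type*} [Fintype V₂]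
    (G₁ : SimpleGraph V₁) (G₂ : SimpleGraph V₂) {k : ℕ} {f c : V₁ → ℕ}
    (hf : Function.Injective f) (hc : ∀ v, c v < k) :
    ∃ f' c' : V₁ × V₂ → ℕ, Function.Injective f' ∧
      (∀ v, c' v < k * Fintype.card V₂) ∧
      (Consistent G₁ f c → Consistent (G₁ □ G₂) f' c') ∧
      (StronglyConsistent G₁ f c → StronglyConsistent (G₁ □ G₂) f' c') := by
  classical
  set n := Fintype.card V₂ with hn
  obtain e₂ := Fintype.equivFin V₂
  set g : V₂ → ℕ := fun w => (e₂ w : ℕ) with hg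
  have hgn : ∀ w, g w < n := fun w => (e₂ w).isLt
  have hginj : Function.Injective g := fun a b h => e₂.injective (Fin.ext h)
  refine ⟨fun p => f p.1 * n + g p.2, fun p => c p.1 * n + g p.2, ?_, ?_, ?_, ?_⟩
  · intro p q h
    obtain ⟨h1, h2⟩ := aux_decomp (hgn p.2) (hgn q.2) h
    exact Prod.ext (hf h1) (hginj h2)
  · intro p
    calc c p.1 * n + g p.2 < c p.1 * n + n := by have := hgn p.2; omega
      _ = (c p.1 + 1) * n := by ring
      _ ≤ k * n := Nat.mul_le_mul_right _ (hc p.1)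
  · -- consistency
    intro hcons r s t h1 h2 hcc hadj
    beta_reduce at h1 h2 hcc
    obtain ⟨hc1, hg1⟩ := aux_decomp (hgn r.2) (hgn s.2) hcc
    have hrs2 : r.2 = s.2 := hginj hg1
    rw [hrs2] at h1
    have hf1 : f r.1 < f s.1 := aux_mono_lt h1
    rw [boxProd_adj] at hadj
    rcases hadj with ⟨ha, ht2⟩ | ⟨ha, ht1⟩
    · -- t.2 = r.2 = s.2
      rw [ht2, hrs2] at h2
      have hf2 : f s.1 < f t.1 := aux_mono_lt h2
      exact boxProd_adj.mpr (Or.inl ⟨hcons r.1 s.1 t.1 hf1 hf2 hc1 ha, ht2.trans hrs2⟩)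
    · -- t.1 = r.1 : impossible
      exfalso
      rw [ht1] at h2
      exact absurd h2 (not_lt.mpr (le_of_lt (aux_strict (hgn t.2) hf1)))
  · -- strong consistency
    intro hcons
    refine ⟨?_, ?_⟩
    · -- reuse the consistency proof
      intro r s t h1 h2 hcc hadj
      beta_reduce at h1 h2 hcc
      obtain ⟨hc1, hg1⟩ := aux_decomp (hgn r.2) (hgn s.2) hcc
      have hrs2 : r.2 = s.2 := hginj hg1
      rw [hrs2] at h1
      have hf1 : f r.1 < f s.1 := aux_mono_lt h1
      rw [boxProd_adj] at hadj
      rcases hadj with ⟨ha, ht2⟩ | ⟨ha, ht1⟩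
      · rw [ht2, hrs2] at h2
        have hf2 : f s.1 < f t.1 := aux_mono_lt h2
        exact boxProd_adj.mpr
          (Or.inl ⟨hcons.1 r.1 s.1 t.1 hf1 hf2 hc1 ha, ht2.trans hrs2⟩)
      · exfalso
        rw [ht1] at h2
        exact absurd h2 (not_lt.mpr (le_of_lt (aux_strict (hgn t.2) hf1)))
    · intro r s t h1 h2 hcc hadj
      beta_reduce at h1 h2 hcc
      obtain ⟨hc1, hg1⟩ := aux_decomp (hgn s.2) (hgn t.2) hcc
      have hst2 : s.2 = t.2 := hginj hg1
      rw [hst2] at h2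
      have hf2 : f s.1 < f t.1 := aux_mono_lt h2
      rw [boxProd_adj] at hadj
      rcases hadj with ⟨ha, ht2⟩ | ⟨ha, ht1⟩
      · -- t.2 = r.2, so s.2 = r.2
        have hrs2 : r.2 = s.2 := by rw [hst2, ← ht2]
        rw [hrs2] at h1
        have hf1 : f r.1 < f s.1 := aux_mono_lt h1
        exact boxProd_adj.mpr
          (Or.inl ⟨hcons.2 r.1 s.1 t.1 hf1 hf2 hc1 ha, hrs2.symm⟩)
      · -- t.1 = r.1 : impossible
        exfalso
        rw [ht1] at hf2
        exact absurd h1 (not_lt.mpr (le_of_lt (aux_strict (hgn s.2) hf2)))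

private lemma aux_nonempty {V : Type*} [Fintype V] (G : SimpleGraph V) :
    Fintype.card V ∈
      {k | ∃ f c : V → ℕ, Function.Injective f ∧ (∀ v, c v < k) ∧
        StronglyConsistent G f c} := by
  classical
  obtain e := Fintype.equivFin V
  refine ⟨fun v => (e v : ℕ), fun v => (e v : ℕ),
    fun a b h => e.injective (Fin.ext h), fun v => (e v).isLt, ?_, ?_⟩
  · intro r s t h1 h2 hcc hadj
    exact absurd hcc (Nat.ne_of_lt h1)
  · intro r s t h1 h2 hcc hadj
    exact absurd hcc (Nat.ne_of_lt h2)

/-- Thinness (and proper thinness) of a Cartesian product is at most the (proper)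
thinness of the first factor times the number of vertices of the second. -/
theorem thin_boxProd {V₁ V₂ : Type*} [Fintype V₁] [Fintype V₂]
    (G₁ : SimpleGraph V₁) (G₂ : SimpleGraph V₂) :
    thin (G₁ □ G₂) ≤ thin G₁ * Fintype.card V₂ ∧
    pthin (G₁ □ G₂) ≤ pthin G₁ * Fintype.card V₂ := by
  constructor
  · have hne : {k | ∃ f c : V₁ → ℕ, Function.Injective f ∧ (∀ v, c v < k) ∧
        Consistent G₁ f c}.Nonempty :=
      ⟨Fintype.card V₁, by
        obtain ⟨f, c, hf, hc, hsc⟩ := aux_nonempty G₁; exact ⟨f, c, hf, hc, hsc.1⟩⟩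
    obtain ⟨f, c, hf, hc, hcons⟩ := Nat.sInf_mem hne
    obtain ⟨f', c', hf', hc', hcons', _⟩ := aux_key G₁ G₂ hf hc
    exact Nat.sInf_le ⟨f', c', hf', hc', hcons' hcons⟩
  · have hne : {k | ∃ f c : V₁ → ℕ, Function.Injective f ∧ (∀ v, c v < k) ∧
        StronglyConsistent G₁ f c}.Nonempty := ⟨Fintype.card V₁, aux_nonempty G₁⟩
    obtain ⟨f, c, hf, hc, hcons⟩ := Nat.sInf_mem hne
    obtain ⟨f', c', hf', hc', _, hcons'⟩ := aux_key G₁ G₂ hf hc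
    exact Nat.sInf_le ⟨f', c', hf', hc', hcons' hcons⟩
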